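/- Let F be a subfield of ℂ containing the Gaussian rationals ℚ(i) = { a + b·i : a, b ∈ ℚ }, and let f : F → F be an SD map that is continuous (with respect to the topology on F induced from ℂ). Then either f is the identity map (f(z) = z for all z ∈ F) or f is complex conjugation restricted to F (f(z) = z̄ for all z ∈ F). -/

import Mathlib

/-- A function `f : F → F` on a field `F` is an *SD map* if for all `x ≠ y` one has
`f x ≠ f y` and `f ((x+y)/(x-y)) = (f x + f y) / (f x - f y)`. -/
def IsSDMap {F : Type*} [Field F] (f : F → F) : Prop :=
  ∀ ⦃x y : F⦄, x ≠ y →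
    f x ≠ f y ∧ f ((x + y) / (x - y)) = (f x + f y) / (f x - f y)

namespace SDAux

variable {F : Subfield ℂ} {f : F → F}

lemma sd_inj (hf : IsSDMap f) : Function.Injective f := by
  intro x y h
  by_contra hxy
  exact (hf hxy).1 h

lemma sd_zero (hf : IsSDMap f) : f 0 = 0 := by
  have h1 := (hf (one_ne_zero (α := F))).2
  have h2 := (hf (two_ne_zero (α := F))).2
  norm_num at h1 h2
  have e1 : f 1 - f 0 ≠ 0 := sub_ne_zero.mpr (fun h => one_ne_zero (sd_inj hf h))
  have e2 : f 2 - f 0 ≠ 0 := sub_ne_zero.mpr (fun h => two_ne_zero (sd_inj hf h))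
  have e12 : f 2 - f 1 ≠ 0 := sub_ne_zero.mpr (fun h => (by norm_num : (2:F) ≠ 1) (sd_inj hf h))
  have h3 : (f 1 + f 0) * (f 2 - f 0) = (f 2 + f 0) * (f 1 - f 0) := by
    rw [← div_eq_div_iff e1 e2, ← h1, ← h2]
  have h4 : f 0 * (2 * (f 2 - f 1)) = 0 := by linear_combination h3
  rcases mul_eq_zero.mp h4 with h | h
  · exact h
  · exact absurd h (by simpa [sub_ne_zero] using e12)

lemma sd_one (hf : IsSDMap f) : f 1 = 1 := by
  have h1 := (hf (one_ne_zero (α := F))).2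
  rw [sd_zero hf] at h1
  norm_num at h1
  have : f 1 ≠ 0 := fun h => one_ne_zero (sd_inj hf (h.trans (sd_zero hf).symm))
  rw [div_self this] at h1
  exact h1

lemma sd_ne_zero (hf : IsSDMap f) {x : F} (hx : x ≠ 0) : f x ≠ 0 := by
  intro h
  exact hx (sd_inj hf (h.trans (sd_zero hf).symm))

lemma sd_neg_one (hf : IsSDMap f) : f (-1) = -1 := by
  have h := (hf (zero_ne_one (α := F))).2
  rw [sd_zero hf, sd_one hf] at h
  norm_num at h
  exact h

lemma sd_sub_ne (hf : IsSDMap f) {x y : F} (h : x ≠ y) : f x - f y ≠ 0 :=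
  sub_ne_zero.mpr (fun hh => h (sd_inj hf hh))

lemma sd_div (hf : IsSDMap f) (x : F) {y : F} (hy : y ≠ 0) :
    f (x / y) = f x / f y := by
  by_cases hxy : x = y
  · subst hxy
    rw [div_self hy, div_self (sd_ne_zero hf hy), sd_one hf]
  · have hxy' : x - y ≠ 0 := sub_ne_zero.mpr hxy
    set u := (x + y) / (x - y) with hu
    have hu1 : u ≠ 1 := by
      intro h
      rw [hu, div_eq_one_iff_eq hxy'] at h
      exact hy (by linear_combination h / 2)
    have h1 := (hf hxy).2
    rw [← hu] at h1
    have h2 := (hf hu1).2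
    rw [sd_one hf] at h2
    have hu' : u - 1 ≠ 0 := sub_ne_zero.mpr hu1
    have heq : (u + 1) / (u - 1) = x / y := by
      rw [div_eq_div_iff hu' hy, hu]
      field_simp
      ring
    rw [heq] at h2
    rw [h1] at h2
    have hfy : f y ≠ 0 := sd_ne_zero hf hy
    have hfd : f x - f y ≠ 0 := sd_sub_ne hf hxy
    have hden : (f x + f y) / (f x - f y) - 1 ≠ 0 := by
      rw [div_sub_one hfd]
      have : f x + f y - (f x - f y) = 2 * f y := by ring
      rw [this]
      exact div_ne_zero (mul_ne_zero two_ne_zero hfy) hfd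
    rw [h2]
    rw [div_eq_div_iff hden hfy]
    field_simp
    ring

lemma sd_mul (hf : IsSDMap f) (x y : F) : f (x * y) = f x * f y := by
  by_cases hy : y = 0
  · simp [hy, sd_zero hf]
  · have h := sd_div hf (x * y) hy
    rw [mul_div_cancel_right₀ x hy, eq_comm, div_eq_iff (sd_ne_zero hf hy)] at h
    exact h

lemma sd_R (hf : IsSDMap f) {x y : F} (hxy : x ≠ y) :
    f (x + y) * (f x - f y) = f (x - y) * (f x + f y) := by
  have h := (hf hxy).2
  have hxy' : x - y ≠ 0 := sub_ne_zero.mpr hxy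
  rw [sd_div hf (x + y) hxy'] at h
  rw [div_eq_div_iff (sd_ne_zero hf hxy') (sd_sub_ne hf hxy)] at h
  linear_combination h

lemma sd_two (hf : IsSDMap f) : f 2 = 2 := by
  have h21 := sd_R hf (show (2:F) ≠ 1 by norm_num)
  have h32 := sd_R hf (show (3:F) ≠ 2 by norm_num)
  have h41 := sd_R hf (show (4:F) ≠ 1 by norm_num)
  norm_num [sd_one hf] at h21 h32 h41
  -- h21 : f 3 * (f 2 - 1) = f 2 + 1
  -- h32 : f 5 * (f 3 - f 2) = f 3 + f 2
  -- h41 : f 5 * (f 4 - 1) = f 3 * (f 4 + 1)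
  have h4 : f 4 = f 2 * f 2 := by
    have := sd_mul hf 2 2; norm_num at this; exact this
  rw [h4] at h41
  set c := f 2 with hc
  set t := f 3 with ht
  have hE : (t + c) * (c * c - 1) = t * (c * c + 1) * (t - c) := by
    linear_combination (-(c*c-1)) * h32 + (t - c) * h41
  have hfin : 2 * c * (c + 1) * (c * c + 1) * (c - 2) = 0 := by
    linear_combination (c-1)^2 * hE + (-(c-1)*(c*c-1) + (c*c+1)*(-c*c+2*c+1+t*(c-1))) * h21
  have hc0 : c ≠ 0 := sd_ne_zero hf (by norm_num)
  have hcm1 : c + 1 ≠ 0 := by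
    intro h
    have : f 2 = f (-1) := by rw [sd_neg_one hf]; linear_combination h
    exact (by norm_num : (2:F) ≠ -1) (sd_inj hf this)
  have hcsq : c * c + 1 ≠ 0 := by
    intro h
    have : f 4 = f (-1) := by rw [sd_neg_one hf, h4]; linear_combination h
    exact (by norm_num : (4:F) ≠ -1) (sd_inj hf this)
  have h2 : c - 2 = 0 := by
    rcases mul_eq_zero.mp hfin with h | h
    · rcases mul_eq_zero.mp h with h | h
      · rcases mul_eq_zero.mp h with h | h
        · rcases mul_eq_zero.mp h with h | h
          · norm_num at h
          · exact absurd h hc0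
        · exact absurd h hcm1
      · exact absurd h hcsq
    · exact h
  linear_combination h2

lemma sd_key (hf : IsSDMap f) {x : F} (h0 : x ≠ 0) (h1 : x ≠ 1) (hm1 : x ≠ -1)
    (h2 : x ≠ 2) :
    ((f x - 1) * f (x + 1) - 1) * (f (x + 1) - (f x + 1)) = 0 := by
  have E1 := sd_R hf (show x ≠ 1 from h1)
  rw [sd_one hf] at E1
  -- E1 : f (x+1) * (f x - 1) = f (x-1) * (f x + 1)
  have E2 := sd_R hf (show x + 1 ≠ 1 by simpa using h0)
  rw [sd_one hf, (show x + 1 + 1 = x + 2 by ring), (show x + 1 - 1 = x by ring)] at E2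
  -- E2 : f (x+2) * (f (x+1) - 1) = f x * (f (x+1) + 1)
  have E3 := sd_R hf (show x - 1 ≠ 1 by intro h; exact h2 (by linear_combination h))
  rw [sd_one hf, (show x - 1 + 1 = x by ring), (show x - 1 - 1 = x - 2 by ring)] at E3
  -- E3 : f x * (f (x-1) - 1) = f (x-2) * (f (x-1) + 1)
  have E4 := sd_R hf (show x ≠ 2 from h2)
  rw [sd_two hf] at E4
  -- E4 : f (x+2) * (f x - 2) = f (x-2) * (f x + 2)
  set A := f x
  set P := f (x + 1)
  set M := f (x - 1)
  have E4' : A * (P + 1) * (A - 2) * (M + 1) = A * (M - 1) * (A + 2) * (P - 1) := by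
    linear_combination (-((M+1)*(A-2))) * E2 + (-((P-1)*(A+2))) * E3 + ((P-1)*(M+1)) * E4
  have hA : A ≠ 0 := sd_ne_zero hf h0
  have hkey0 : (-4 * A) * (((A - 1) * P - 1) * (P - (A + 1))) = 0 := by
    linear_combination (A+1) * E4' + (A * ((A-2)*(P+1) - (A+2)*(P-1))) * E1
  rcases mul_eq_zero.mp hkey0 with h | h
  · exact absurd h (by simpa using hA)
  · linear_combination h

lemma sd_bad (hf : IsSDMap f) {x : F} (hm2 : x ≠ -2) (hm1 : x ≠ -1) (h0 : x ≠ 0)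
    (h1 : x ≠ 1) (h2 : x ≠ 2) (hbad : f (x + 1) ≠ f x + 1) :
    (f x) ^ 2 = 2 ∨ (f x) ^ 2 - f x + 1 = 0 := by
  have k1 := sd_key hf h0 h1 hm1 h2
  have hP1 : (f x - 1) * f (x + 1) = 1 := by
    rcases mul_eq_zero.mp k1 with h | h
    · linear_combination h
    · exact absurd (by linear_combination h) hbad
  have k2 := sd_key hf (x := x + 1)
    (by intro h; exact hm1 (by linear_combination h))
    (by intro h; exact h0 (by linear_combination h))
    (by intro h; exact hm2 (by linear_combination h))
    (by intro h; exact h1 (by linear_combination h))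
  rw [(show x + 1 + 1 = x + 2 by ring)] at k2
  have E2 := sd_R hf (show x + 1 ≠ 1 by simpa using h0)
  rw [sd_one hf, (show x + 1 + 1 = x + 2 by ring), (show x + 1 - 1 = x by ring)] at E2
  set A := f x
  set P := f (x + 1)
  set Q := f (x + 2)
  rcases mul_eq_zero.mp k2 with h | h
  · -- (P - 1) * Q = 1
    have hQ : (P - 1) * Q = 1 := by linear_combination h
    have hAP : A * (P + 1) = 1 := by
      -- E2 : Q * (P - 1) = A * (P + 1)
      linear_combination hQ - E2
    -- hP1 : (A - 1) * P = 1 ; solve: P = -A, then A^2 - A + 1 = 0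
    right
    -- from hAP - hP1 : A*P + A - A*P + P = 0 => P = -A
    have hPA : P = -A := by linear_combination hAP - hP1
    rw [hPA] at hP1
    linear_combination -hP1
  · -- Q = P + 1
    have hQ : Q = P + 1 := by linear_combination h
    rw [hQ] at E2
    -- (P+1)(P-1) = A(P+1) ⇒ (P+1)(P-1-A) = 0
    have hPne : P + 1 ≠ 0 := by
      intro hh
      have : f (x + 1) = f (-1) := by rw [sd_neg_one hf]; linear_combination hh
      exact hm2 (by linear_combination (sd_inj hf this))
    have hfac : (P + 1) * (P - 1 - A) = 0 := by linear_combination E2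
    have hP : P = A + 1 := by
      rcases mul_eq_zero.mp hfac with h' | h'
      · exact absurd h' hPne
      · linear_combination h'
    rw [hP] at hP1
    left
    linear_combination hP1

lemma finite_quad (a b : F) : {s : F | s ^ 2 + a * s + b = 0}.Finite := by
  rcases Set.eq_empty_or_nonempty {s : F | s ^ 2 + a * s + b = 0} with h | ⟨r, hr⟩
  · simp [h]
  · have hsub : {s : F | s ^ 2 + a * s + b = 0} ⊆ {r, -a - r} := by
      intro s hs
      have hfac : (s - r) * (s - (-a - r)) = 0 := by
        have hs' : s ^ 2 + a * s + b = 0 := hs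
        have hr' : r ^ 2 + a * r + b = 0 := hr
        linear_combination hs' - hr'
      rcases mul_eq_zero.mp hfac with h' | h'
      · left; linear_combination h'
      · right; show s = -a - r; linear_combination h'
    exact (Set.finite_singleton _ |>.insert _).subset hsub

lemma sd_badset_finite (hf : IsSDMap f) : {x : F | f (x + 1) ≠ f x + 1}.Finite := by
  have hsub : {x : F | f (x + 1) ≠ f x + 1} ⊆
      ({-2, -1, 0, 1, 2} : Set F) ∪
      f ⁻¹' ({s : F | s ^ 2 + 0 * s + (-2) = 0} ∪ {s : F | s ^ 2 + (-1) * s + 1 = 0}) := by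
    intro x hx
    by_cases hm2 : x = -2
    · exact Or.inl (by simp [hm2])
    by_cases hm1 : x = -1
    · exact Or.inl (by simp [hm1])
    by_cases h0 : x = 0
    · exact Or.inl (by simp [h0])
    by_cases h1 : x = 1
    · exact Or.inl (by simp [h1])
    by_cases h2 : x = 2
    · exact Or.inl (by simp [h2])
    rcases sd_bad hf hm2 hm1 h0 h1 h2 hx with h | h
    · exact Or.inr (Or.inl (show (f x)^2 + 0 * f x + (-2) = 0 by linear_combination h))
    · exact Or.inr (Or.inr (show (f x)^2 + (-1) * f x + 1 = 0 by linear_combination h))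
  refine Set.Finite.subset ?_ hsub
  refine Set.Finite.union (((((Set.finite_singleton (2:F)).insert 1).insert 0).insert (-1)).insert (-2)) ?_
  exact ((finite_quad _ _).union (finite_quad _ _)).preimage (Set.injOn_of_injective (sd_inj hf))

lemma tendsto_aux (x : F) :
    Filter.Tendsto (fun n : ℕ => ((x : ℂ) + ((n : ℂ) + 1)⁻¹)) Filter.atTop (nhds (x : ℂ)) := by
  have h1 : Filter.Tendsto (fun n : ℕ => (((n : ℝ) + 1)⁻¹ : ℝ)) Filter.atTop (nhds 0) :=
    tendsto_one_div_add_atTop_nhds_zero_nat.congr (by intro n; simp [one_div])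
  have h2 : Filter.Tendsto (fun n : ℕ => (((n : ℝ) + 1)⁻¹ : ℂ)) Filter.atTop (nhds 0) := by
    have := (Complex.continuous_ofReal.tendsto 0).comp h1
    simpa [Function.comp_def] using this
  have h3 : Filter.Tendsto (fun n : ℕ => ((n : ℂ) + 1)⁻¹) Filter.atTop (nhds 0) := by
    refine h2.congr (fun n => ?_)
    push_cast
    ring
  simpa using (tendsto_const_nhds.add h3)

lemma sd_shift (hf : IsSDMap f) (hcont : Continuous f) (x : F) :
    f (x + 1) = f x + 1 := by
  set u : ℕ → F := fun n => x + ((n : F) + 1)⁻¹ with hu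
  have hinj : Function.Injective u := by
    intro a b hab
    have h1 : ((a : F) + 1)⁻¹ = ((b : F) + 1)⁻¹ := by
      have := hab
      simp only [hu] at this
      exact add_left_cancel this
    have h2 : ((a : F) + 1) = ((b : F) + 1) :=
      inv_injective h1
    exact_mod_cast add_right_cancel h2
  have hgood : ∀ᶠ n in Filter.atTop, f (u n + 1) = f (u n) + 1 := by
    have hfin : {n : ℕ | f (u n + 1) ≠ f (u n) + 1}.Finite := by
      have : {n : ℕ | f (u n + 1) ≠ f (u n) + 1} = u ⁻¹' {x : F | f (x + 1) ≠ f x + 1} := rfl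
      rw [this]
      exact (sd_badset_finite hf).preimage (Set.injOn_of_injective hinj)
    rw [← Nat.cofinite_eq_atTop]
    simpa using Set.Finite.eventually_cofinite_notMem hfin
  -- tendsto of u to x in F
  have hcu : Filter.Tendsto u Filter.atTop (nhds x) := by
    rw [tendsto_subtype_rng]
    have : (fun n : ℕ => ((u n : ℂ))) = fun n : ℕ => ((x : ℂ) + ((n : ℂ) + 1)⁻¹) := by
      funext n
      show ((x + ((n : F) + 1)⁻¹ : F) : ℂ) = _
      push_cast
      ring
    rw [this]
    exact tendsto_aux x
  have hcu1 : Filter.Tendsto (fun n => u n + 1) Filter.atTop (nhds (x + 1)) := by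
    rw [tendsto_subtype_rng]
    rw [tendsto_subtype_rng] at hcu
    have : (fun n : ℕ => ((u n + 1 : F) : ℂ)) = fun n : ℕ => ((u n : F) : ℂ) + 1 := by
      funext n; push_cast; ring
    rw [this]
    simpa using hcu.add tendsto_const_nhds
  have t1 : Filter.Tendsto (fun n => ((f (u n + 1) : ℂ))) Filter.atTop (nhds ((f (x + 1) : ℂ))) :=
    (continuous_subtype_val.tendsto _).comp ((hcont.tendsto _).comp hcu1)
  have t2 : Filter.Tendsto (fun n => ((f (u n) : ℂ) + 1)) Filter.atTop (nhds ((f x : ℂ) + 1)) := by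
    have := (continuous_subtype_val.tendsto _).comp ((hcont.tendsto _).comp hcu)
    simpa using this.add tendsto_const_nhds
  have t1' : Filter.Tendsto (fun n => ((f (u n + 1) : ℂ))) Filter.atTop (nhds ((f x : ℂ) + 1)) := by
    refine t2.congr' ?_
    filter_upwards [hgood] with n hn
    rw [hn]
    push_cast
    ring
  have h := tendsto_nhds_unique t1 t1'
  refine Subtype.ext ?_
  push_cast
  exact h

lemma sd_add (hf : IsSDMap f) (hcont : Continuous f) (x y : F) :
    f (x + y) = f x + f y := by
  by_cases hy : y = 0
  · simp [hy, sd_zero hf]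
  · have h := sd_shift hf hcont (x / y)
    have e : x + y = y * (x / y + 1) := by field_simp
    rw [e, sd_mul hf, h, sd_div hf x hy]
    have hfy : f y ≠ 0 := sd_ne_zero hf hy
    field_simp

/-- the SD map as a ring hom -/
noncomputable def sdHom (hf : IsSDMap f) (hcont : Continuous f) : F →+* F where
  toFun := f
  map_one' := sd_one hf
  map_mul' := sd_mul hf
  map_zero' := sd_zero hf
  map_add' := sd_add hf hcont

lemma sd_rat (hf : IsSDMap f) (hcont : Continuous f) (q : ℚ) : f (q : F) = (q : F) :=
  map_ratCast (sdHom hf hcont) q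

lemma rat_approx (x : ℝ) :
    ∃ u : ℕ → ℚ, Filter.Tendsto (fun n => ((u n : ℝ))) Filter.atTop (nhds x) := by
  have h : ∀ n : ℕ, ∃ q : ℚ, |x - (q : ℝ)| < ((n : ℝ) + 1)⁻¹ := by
    intro n
    exact exists_rat_near x (by positivity)
  choose u hu using h
  refine ⟨u, ?_⟩
  rw [tendsto_iff_dist_tendsto_zero]
  refine squeeze_zero (fun n => dist_nonneg) (fun n => ?_) tendsto_one_div_add_atTop_nhds_zero_nat
  rw [Real.dist_eq, abs_sub_comm, one_div]
  exact (hu n).le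

lemma gauss_approx (z : ℂ) :
    ∃ u v : ℕ → ℚ, Filter.Tendsto (fun n => ((u n : ℂ) + (v n : ℂ) * Complex.I))
      Filter.atTop (nhds z) := by
  obtain ⟨u, hu⟩ := rat_approx z.re
  obtain ⟨v, hv⟩ := rat_approx z.im
  refine ⟨u, v, ?_⟩
  have hu' : Filter.Tendsto (fun n => ((u n : ℂ))) Filter.atTop (nhds (z.re : ℂ)) := by
    have := (Complex.continuous_ofReal.tendsto _).comp hu
    simpa [Function.comp_def] using this
  have hv' : Filter.Tendsto (fun n => ((v n : ℂ))) Filter.atTop (nhds (z.im : ℂ)) := by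
    have := (Complex.continuous_ofReal.tendsto _).comp hv
    simpa [Function.comp_def] using this
  have := hu'.add (hv'.mul_const Complex.I)
  simpa [Complex.re_add_im] using this

end SDAux

open SDAux in
theorem continuous_sd_map_subfield_containing_gaussian_rationals (F : Subfield ℂ)
    (hQi : ∀ a b : ℚ, (a : ℂ) + (b : ℂ) * Complex.I ∈ F)
    (f : F → F) (hf : IsSDMap f) (hcont : Continuous f) :
    (∀ z : F, (f z : ℂ) = (z : ℂ)) ∨ (∀ z : F, (f z : ℂ) = (starRingEnd ℂ) (z : ℂ)) := by
  have hIm : Complex.I ∈ F := by simpa using hQi 0 1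
  set I : F := ⟨Complex.I, hIm⟩ with hIdef
  have hI2 : I * I = -1 := by
    refine Subtype.ext ?_
    push_cast
    simp [hIdef, Complex.I_mul_I]
  have hfI2 : f I * f I = -1 := by
    rw [← sd_mul hf, hI2, sd_neg_one hf]
  have hfIcase : (f I : ℂ) = Complex.I ∨ (f I : ℂ) = -Complex.I := by
    have h : ((f I : ℂ)) * (f I : ℂ) = -1 := by
      have := congrArg (fun t : F => (t : ℂ)) hfI2
      push_cast at this
      exact this
    have hfac : ((f I : ℂ) - Complex.I) * ((f I : ℂ) + Complex.I) = 0 := by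
      linear_combination h - Complex.I_mul_I
    rcases mul_eq_zero.mp hfac with h' | h'
    · left; linear_combination h'
    · right; linear_combination h'
  -- value of f on gaussian rationals
  have hgauss : ∀ a b : ℚ, (f ⟨(a : ℂ) + (b : ℂ) * Complex.I, hQi a b⟩ : ℂ)
      = (a : ℂ) + (b : ℂ) * (f I : ℂ) := by
    intro a b
    have hw : (⟨(a : ℂ) + (b : ℂ) * Complex.I, hQi a b⟩ : F) = (a : F) + (b : F) * I := by
      refine Subtype.ext ?_
      push_cast
      rfl
    rw [hw, sd_add hf hcont, sd_mul hf, sd_rat hf hcont, sd_rat hf hcont]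
    push_cast
    rfl
  -- the limit machinery
  have main : ∀ z : F, (f z : ℂ) = Complex.ofReal (z:ℂ).re + Complex.ofReal (z:ℂ).im * (f I : ℂ) := by
    intro z
    obtain ⟨u, v, huv⟩ := gauss_approx (z : ℂ)
    set w : ℕ → F := fun n => ⟨(u n : ℂ) + (v n : ℂ) * Complex.I, hQi (u n) (v n)⟩ with hw
    have hwz : Filter.Tendsto w Filter.atTop (nhds z) := by
      rw [tendsto_subtype_rng]
      exact huv
    have t1 : Filter.Tendsto (fun n => ((f (w n) : ℂ))) Filter.atTop (nhds ((f z : ℂ))) :=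
      (continuous_subtype_val.tendsto _).comp ((hcont.tendsto _).comp hwz)
    have t2 : Filter.Tendsto (fun n => ((u n : ℂ) + (v n : ℂ) * (f I : ℂ))) Filter.atTop
        (nhds (Complex.ofReal (z:ℂ).re + Complex.ofReal (z:ℂ).im * (f I : ℂ))) := by
      obtain ⟨hu, hv⟩ : Filter.Tendsto (fun n => ((u n : ℂ))) Filter.atTop (nhds ((z:ℂ).re : ℂ))
          ∧ Filter.Tendsto (fun n => ((v n : ℂ))) Filter.atTop (nhds ((z:ℂ).im : ℂ)) := by
        constructor
        · have := (Complex.continuous_re.tendsto _).comp huv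
          have h2 := (Complex.continuous_ofReal.tendsto _).comp this
          simpa [Function.comp_def] using h2
        · have := (Complex.continuous_im.tendsto _).comp huv
          have h2 := (Complex.continuous_ofReal.tendsto _).comp this
          simpa [Function.comp_def] using h2
      exact hu.add (hv.mul_const _)
    exact tendsto_nhds_unique t1 (by
      refine t2.congr (fun n => ?_)
      exact (hgauss (u n) (v n)).symm)
  rcases hfIcase with hcase | hcase
  · left
    intro z
    rw [main z, hcase]
    simpa using (Complex.re_add_im (z:ℂ))
  · right
    intro z
    rw [main z, hcase]
    conv_rhs => rw [← Complex.re_add_im (z:ℂ)]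
    simp only [map_add, map_mul, Complex.conj_I, Complex.conj_ofReal]
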